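/- Let V be a finite set, T ≥ 1, and for each t ∈ {1,…,T} let p_t^u, p_t^r be probability mass functions on V with mixture p_t^d = α·p_t^r + (1−α)·p_t^u for a fixed α ∈ (0,1). Fix u = (u_1,…,u_T) ∈ V^T and γ ∈ (0,1] with min{p_t^u(u_t), p_t^r(u_t)} ≥ γ for all t. Then |(1/T)·Σ_t log p_t^u(u_t) − (1/T)·Σ_t log p_t^r(u_t)| ≤ (2√2/(γ(1−α)))·√((1/T)·Σ_t JS(p_t^d, p_t^r)). -/

import Mathlib

open Finset

/-- Kullback–Leibler divergence (natural log). -/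
noncomputable def KL {V : Type*} [Fintype V] (p q : V → ℝ) : ℝ :=
  ∑ x, p x * Real.log (p x / q x)

/-- Jensen–Shannon divergence. -/
noncomputable def JS {V : Type*} [Fintype V] (p q : V → ℝ) : ℝ :=
  (1 / 2) * KL p (fun x => (p x + q x) / 2) + (1 / 2) * KL q (fun x => (p x + q x) / 2)

/- ## Auxiliary lemmas -/

private lemma psi_hasDeriv (x : ℝ) (h1 : (0:ℝ) < 1 + x) (h2 : (0:ℝ) < 1 - x) :
    HasDerivAt (fun y => Real.log (1 + y) - Real.log (1 - y) - 2 * y)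
      (1 / (1 + x) + 1 / (1 - x) - 2) x := by
  have ha : HasDerivAt (fun y : ℝ => 1 + y) 1 x := by
    simpa using (hasDerivAt_id x).const_add (1 : ℝ)
  have hb : HasDerivAt (fun y : ℝ => 1 - y) (-1) x := by
    simpa using (hasDerivAt_id x).const_sub (1 : ℝ)
  have hla : HasDerivAt (fun y => Real.log (1 + y)) (1 / (1 + x)) x := by
    simpa [one_div, Function.comp_def] using (Real.hasDerivAt_log h1.ne').comp x ha
  have hlb : HasDerivAt (fun y => Real.log (1 - y)) (-(1 / (1 - x))) x := by
    simpa [one_div, Function.comp_def] using (Real.hasDerivAt_log h2.ne').comp x hb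
  have h2x : HasDerivAt (fun y : ℝ => 2 * y) 2 x := by
    simpa using (hasDerivAt_id x).const_mul (2 : ℝ)
  have := (hla.sub hlb).sub h2x
  exact this.congr_deriv (by ring)

private lemma phi_hasDeriv (x : ℝ) (h1 : (0:ℝ) < 1 + x) (h2 : (0:ℝ) < 1 - x) :
    HasDerivAt (fun y => (1 + y) * Real.log (1 + y) + (1 - y) * Real.log (1 - y) - y ^ 2)
      (Real.log (1 + x) - Real.log (1 - x) - 2 * x) x := by
  have ha : HasDerivAt (fun y : ℝ => 1 + y) 1 x := by
    simpa using (hasDerivAt_id x).const_add (1 : ℝ)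
  have hb : HasDerivAt (fun y : ℝ => 1 - y) (-1) x := by
    simpa using (hasDerivAt_id x).const_sub (1 : ℝ)
  have hla : HasDerivAt (fun y => Real.log (1 + y)) (1 / (1 + x)) x := by
    simpa [one_div, Function.comp_def] using (Real.hasDerivAt_log h1.ne').comp x ha
  have hlb : HasDerivAt (fun y => Real.log (1 - y)) (-(1 / (1 - x))) x := by
    simpa [one_div, Function.comp_def] using (Real.hasDerivAt_log h2.ne').comp x hb
  have hsq : HasDerivAt (fun y : ℝ => y ^ 2) (2 * x) x := by
    simpa using hasDerivAt_pow 2 x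
  have := ((ha.mul hla).add (hb.mul hlb)).sub hsq
  exact this.congr_deriv (by rw [mul_one_div_cancel h1.ne', mul_neg, mul_one_div_cancel h2.ne']; ring)

private lemma psi_nonneg {x : ℝ} (hx0 : 0 ≤ x) (hx1 : x < 1) :
    0 ≤ Real.log (1 + x) - Real.log (1 - x) - 2 * x := by
  set ψ : ℝ → ℝ := fun y => Real.log (1 + y) - Real.log (1 - y) - 2 * y with hψ
  have hmono : MonotoneOn ψ (Set.Ico (0:ℝ) 1) := by
    apply monotoneOn_of_deriv_nonneg (convex_Ico 0 1)
    · intro y hy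
      exact (psi_hasDeriv y (by linarith [hy.1]) (by linarith [hy.2])).continuousAt.continuousWithinAt
    · intro y hy
      rw [interior_Ico] at hy
      exact (psi_hasDeriv y (by linarith [hy.1]) (by linarith [hy.2])).differentiableAt.differentiableWithinAt
    · intro y hy
      rw [interior_Ico] at hy
      obtain ⟨hy0, hy1⟩ := hy
      rw [(psi_hasDeriv y (by linarith) (by linarith)).deriv]
      have hp1 : (0:ℝ) < 1 + y := by linarith
      have hp2 : (0:ℝ) < 1 - y := by linarith
      have hprod : (0:ℝ) < (1 + y) * (1 - y) := mul_pos hp1 hp2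
      have key : 1 / (1 + y) + 1 / (1 - y) - 2 = 2 * y ^ 2 / ((1 + y) * (1 - y)) := by
        rw [eq_div_iff hprod.ne']
        field_simp
        ring
      rw [key]
      positivity
  have h0 : ψ 0 = 0 := by simp [hψ]
  have := hmono (Set.mem_Ico.2 ⟨le_refl 0, one_pos⟩) (Set.mem_Ico.2 ⟨hx0, hx1⟩) hx0
  rw [h0] at this
  exact this

private lemma phi_nonneg_aux {x : ℝ} (hx0 : 0 ≤ x) (hx1 : x < 1) :
    x ^ 2 ≤ (1 + x) * Real.log (1 + x) + (1 - x) * Real.log (1 - x) := by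
  set φ : ℝ → ℝ := fun y => (1 + y) * Real.log (1 + y) + (1 - y) * Real.log (1 - y) - y ^ 2
    with hφ
  have hmono : MonotoneOn φ (Set.Ico (0:ℝ) 1) := by
    apply monotoneOn_of_deriv_nonneg (convex_Ico 0 1)
    · intro y hy
      exact (phi_hasDeriv y (by linarith [hy.1]) (by linarith [hy.2])).continuousAt.continuousWithinAt
    · intro y hy
      rw [interior_Ico] at hy
      exact (phi_hasDeriv y (by linarith [hy.1]) (by linarith [hy.2])).differentiableAt.differentiableWithinAt
    · intro y hy
      rw [interior_Ico] at hy
      rw [(phi_hasDeriv y (by linarith [hy.1]) (by linarith [hy.2])).deriv]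
      exact psi_nonneg hy.1.le hy.2
  have h0 : φ 0 = 0 := by simp [hφ]
  have := hmono (Set.mem_Ico.2 ⟨le_refl 0, one_pos⟩) (Set.mem_Ico.2 ⟨hx0, hx1⟩) hx0
  rw [h0] at this
  simp only [hφ] at this
  linarith

private lemma core_nonneg {x : ℝ} (hx : x ∈ Set.Icc (-1:ℝ) 1) :
    x ^ 2 ≤ (1 + x) * Real.log (1 + x) + (1 - x) * Real.log (1 - x) := by
  obtain ⟨hl, hr⟩ := hx
  have key : ∀ y : ℝ, 0 ≤ y → y ≤ 1 →
      y ^ 2 ≤ (1 + y) * Real.log (1 + y) + (1 - y) * Real.log (1 - y) := by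
    intro y hy0 hy1
    rcases lt_or_eq_of_le hy1 with h | h
    · exact phi_nonneg_aux hy0 h
    · subst h
      simp only [sub_self, zero_mul, add_zero]
      have h2 : (0.6931471803 : ℝ) < Real.log 2 := Real.log_two_gt_d9
      norm_num
      nlinarith
  rcases le_total 0 x with h | h
  · exact key x h hr
  · have := key (-x) (by linarith) (by linarith)
    have e : (1 + -x) = 1 - x := by ring
    have e2 : (1 - -x) = 1 + x := by ring
    rw [e, e2] at this
    nlinarith [this]

/-- pointwise Jensen–Shannon lower bound: per-point contribution dominates `(a-b)²/(2(a+b))`. -/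
private lemma pt_bound {a b : ℝ} (ha : 0 ≤ a) (hb : 0 ≤ b) :
    (a - b) ^ 2 / (2 * (a + b)) ≤
      a * Real.log (a / ((a + b) / 2)) + b * Real.log (b / ((a + b) / 2)) := by
  rcases eq_or_lt_of_le (add_nonneg ha hb) with h | hs
  · have ha0 : a = 0 := by linarith
    have hb0 : b = 0 := by linarith
    simp [ha0, hb0]
  · set s := a + b with hsdef
    set x := (a - b) / s with hxdef
    have hsne : s ≠ 0 := ne_of_gt hs
    have hx : x ∈ Set.Icc (-1:ℝ) 1 := by
      constructor
      · rw [hxdef, le_div_iff₀ hs]; nlinarith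
      · rw [hxdef, div_le_one hs]; nlinarith
    have e1 : a / (s / 2) = 1 + x := by
      rw [hxdef]; field_simp; ring
    have e2 : b / (s / 2) = 1 - x := by
      rw [hxdef]; field_simp; ring
    have ea : a = s * (1 + x) / 2 := by
      rw [hxdef]; field_simp; ring
    have eb : b = s * (1 - x) / 2 := by
      rw [hxdef]; field_simp; ring
    have hcore := core_nonneg hx
    calc (a - b) ^ 2 / (2 * s) = s / 2 * x ^ 2 := by
          rw [hxdef]; field_simp
      _ ≤ s / 2 * ((1 + x) * Real.log (1 + x) + (1 - x) * Real.log (1 - x)) := by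
          apply mul_le_mul_of_nonneg_left hcore (by positivity)
      _ = a * Real.log (a / (s / 2)) + b * Real.log (b / (s / 2)) := by
          rw [e1, e2]
          rw [ea, eb]
          ring

private lemma JS_nonneg {V : Type*} [Fintype V] (p q : V → ℝ)
    (hp0 : ∀ x, 0 ≤ p x) (hq0 : ∀ x, 0 ≤ q x) : 0 ≤ JS p q := by
  have : JS p q = (1/2) * ∑ x, (p x * Real.log (p x / ((p x + q x)/2)) +
      q x * Real.log (q x / ((p x + q x)/2))) := by
    rw [JS, KL, KL, Finset.sum_add_distrib]
    ring
  rw [this]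
  apply mul_nonneg (by norm_num)
  apply Finset.sum_nonneg
  intro x _
  have := pt_bound (hp0 x) (hq0 x)
  have hpq : 0 ≤ p x + q x := add_nonneg (hp0 x) (hq0 x)
  have h2 : 0 ≤ (p x - q x) ^ 2 / (2 * (p x + q x)) := by positivity
  linarith

/-- `‖p - q‖₁ ≤ 2√2 √(JS p q)` for probability vectors. -/
private lemma l1_le_sqrt_JS {V : Type*} [Fintype V] (p q : V → ℝ)
    (hp0 : ∀ x, 0 ≤ p x) (hq0 : ∀ x, 0 ≤ q x)
    (hp1 : ∑ x, p x = 1) (hq1 : ∑ x, q x = 1) :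
    ∑ x, |p x - q x| ≤ 2 * Real.sqrt 2 * Real.sqrt (JS p q) := by
  set F : V → ℝ := fun x => (p x - q x) ^ 2 / (p x + q x) with hF
  have hFnn : ∀ x, 0 ≤ F x := fun x => by
    have := add_nonneg (hp0 x) (hq0 x); positivity
  -- Cauchy–Schwarz step
  have hcs : (∑ x, |p x - q x|) ^ 2 ≤ 2 * ∑ x, F x := by
    have key := Finset.sum_mul_sq_le_sq_mul_sq Finset.univ
      (fun x => Real.sqrt (p x + q x)) (fun x => |p x - q x| / Real.sqrt (p x + q x))
    have e1 : ∀ x : V, Real.sqrt (p x + q x) * (|p x - q x| / Real.sqrt (p x + q x))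
        = |p x - q x| := by
      intro x
      rcases eq_or_lt_of_le (add_nonneg (hp0 x) (hq0 x)) with h | h
      · have hp' : p x = 0 := by linarith [hp0 x, hq0 x]
        have hq' : q x = 0 := by linarith [hp0 x, hq0 x]
        simp [hp', hq']
      · rw [mul_div_assoc']
        rw [mul_comm, mul_div_assoc, div_self (Real.sqrt_ne_zero'.2 h)]
        ring
    have e2 : ∀ x : V, Real.sqrt (p x + q x) ^ 2 = p x + q x := fun x =>
      Real.sq_sqrt (add_nonneg (hp0 x) (hq0 x))
    have e3 : ∀ x : V, (|p x - q x| / Real.sqrt (p x + q x)) ^ 2 = F x := by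
      intro x
      rcases eq_or_lt_of_le (add_nonneg (hp0 x) (hq0 x)) with h | h
      · have hp' : p x = 0 := by linarith [hp0 x, hq0 x]
        have hq' : q x = 0 := by linarith [hp0 x, hq0 x]
        simp [hF, hp', hq']
      · rw [div_pow, sq_abs, Real.sq_sqrt (add_nonneg (hp0 x) (hq0 x))]
    simp only [e1] at key
    calc (∑ x, |p x - q x|) ^ 2 ≤ (∑ x, Real.sqrt (p x + q x) ^ 2) *
          ∑ x, (|p x - q x| / Real.sqrt (p x + q x)) ^ 2 := key
      _ = 2 * ∑ x, F x := by
          simp only [e2, e3]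
          rw [Finset.sum_add_distrib, hp1, hq1]
          norm_num
  -- entropy step
  have hFJS : ∑ x, F x ≤ 4 * JS p q := by
    have hsum : ∑ x, (p x - q x) ^ 2 / (2 * (p x + q x)) ≤ 2 * JS p q := by
      have e : JS p q = (1/2) * ∑ x, (p x * Real.log (p x / ((p x + q x)/2)) +
          q x * Real.log (q x / ((p x + q x)/2))) := by
        rw [JS, KL, KL, Finset.sum_add_distrib]; ring
      rw [e]
      have := Finset.sum_le_sum (fun x (_ : x ∈ Finset.univ) => pt_bound (hp0 x) (hq0 x))
      linarith
    have e4 : ∀ x : V, (p x - q x) ^ 2 / (2 * (p x + q x)) = F x / 2 := by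
      intro x
      rw [hF, div_div, mul_comm]
    simp only [e4] at hsum
    rw [← Finset.sum_div] at hsum
    linarith
  -- combine
  have hJSnn : 0 ≤ JS p q := JS_nonneg p q hp0 hq0
  have habs : 0 ≤ ∑ x, |p x - q x| := Finset.sum_nonneg fun x _ => abs_nonneg _
  have h8 : (∑ x, |p x - q x|) ^ 2 ≤ 8 * JS p q := by linarith
  calc ∑ x, |p x - q x| = Real.sqrt ((∑ x, |p x - q x|) ^ 2) := (Real.sqrt_sq habs).symm
    _ ≤ Real.sqrt (8 * JS p q) := Real.sqrt_le_sqrt h8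
    _ = 2 * Real.sqrt 2 * Real.sqrt (JS p q) := by
        rw [show (8 : ℝ) * JS p q = (2 * Real.sqrt 2) ^ 2 * JS p q by
            rw [mul_pow, Real.sq_sqrt (by norm_num : (0:ℝ) ≤ 2)]; ring,
          Real.sqrt_mul (by positivity), Real.sqrt_sq (by positivity)]

private lemma log_gap_aux {a b γ : ℝ} (hγ : 0 < γ) (ha : γ ≤ a) (hb : γ ≤ b) (hba : b ≤ a) :
    |Real.log a - Real.log b| ≤ |a - b| / γ := by
  have hb0 : 0 < b := lt_of_lt_of_le hγ hb
  have ha0 : 0 < a := lt_of_lt_of_le hγ ha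
  rw [abs_of_nonneg (by linarith : (0:ℝ) ≤ a - b)]
  rw [abs_of_nonneg (sub_nonneg.2 (Real.log_le_log hb0 hba))]
  have h1 : Real.log a - Real.log b = Real.log (a / b) := (Real.log_div ha0.ne' hb0.ne').symm
  rw [h1]
  have h2 : Real.log (a / b) ≤ a / b - 1 := Real.log_le_sub_one_of_pos (by positivity)
  have h3 : a / b - 1 = (a - b) / b := by field_simp
  have h4 : (a - b) / b ≤ (a - b) / γ :=
    div_le_div_of_nonneg_left (by linarith) hγ hb
  linarith

private lemma log_gap {a b γ : ℝ} (hγ : 0 < γ) (ha : γ ≤ a) (hb : γ ≤ b) :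
    |Real.log a - Real.log b| ≤ |a - b| / γ := by
  rcases le_total b a with h | h
  · exact log_gap_aux hγ ha hb h
  · rw [abs_sub_comm, abs_sub_comm a b]
    exact log_gap_aux hγ hb ha h

/-- MarI controls the self-perplexity gap (Theorem: self-perplexity gap). -/
theorem self_perplexity_gap {V : Type*} [Fintype V] (T : ℕ) (hT : 1 ≤ T)
    (pu pr : Fin T → V → ℝ) (α : ℝ) (hα : α ∈ Set.Ioo (0 : ℝ) 1)
    (hpu0 : ∀ t x, 0 ≤ pu t x) (hpr0 : ∀ t x, 0 ≤ pr t x)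
    (hpu1 : ∀ t, ∑ x, pu t x = 1) (hpr1 : ∀ t, ∑ x, pr t x = 1)
    (u : Fin T → V) (γ : ℝ) (hγ : γ ∈ Set.Ioc (0 : ℝ) 1)
    (hmin : ∀ t, γ ≤ min (pu t (u t)) (pr t (u t))) :
    |(1 / (T : ℝ)) * ∑ t, Real.log (pu t (u t)) -
        (1 / (T : ℝ)) * ∑ t, Real.log (pr t (u t))| ≤
      (2 * Real.sqrt 2 / (γ * (1 - α))) *
        Real.sqrt ((1 / (T : ℝ)) *
          ∑ t, JS (fun x => α * pr t x + (1 - α) * pu t x) (pr t)) := by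
  obtain ⟨hα0, hα1⟩ := hα
  obtain ⟨hγ0, hγ1⟩ := hγ
  have h1α : 0 < 1 - α := by linarith
  have hT0 : (0:ℝ) < T := by exact_mod_cast hT
  set pd : Fin T → V → ℝ := fun t x => α * pr t x + (1 - α) * pu t x with hpd
  set J : Fin T → ℝ := fun t => JS (pd t) (pr t) with hJ
  have hpd0 : ∀ t x, 0 ≤ pd t x := fun t x =>
    add_nonneg (mul_nonneg hα0.le (hpr0 t x)) (mul_nonneg h1α.le (hpu0 t x))
  have hpd1 : ∀ t, ∑ x, pd t x = 1 := by
    intro t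
    simp only [hpd]
    rw [Finset.sum_add_distrib, ← Finset.mul_sum, ← Finset.mul_sum, hpr1 t, hpu1 t]
    ring
  have hJnn : ∀ t, 0 ≤ J t := fun t => JS_nonneg _ _ (hpd0 t) (hpr0 t)
  -- per-step bound
  have hstep : ∀ t, |Real.log (pu t (u t)) - Real.log (pr t (u t))| ≤
      (2 * Real.sqrt 2 / (γ * (1 - α))) * Real.sqrt (J t) := by
    intro t
    have hmin' := hmin t
    have hau : γ ≤ pu t (u t) := le_trans hmin' (min_le_left _ _)
    have har : γ ≤ pr t (u t) := le_trans hmin' (min_le_right _ _)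
    have h1 := log_gap hγ0 hau har
    have h2 : |pu t (u t) - pr t (u t)| ≤ ∑ x, |pu t x - pr t x| :=
      Finset.single_le_sum (f := fun x => |pu t x - pr t x|) (fun x _ => abs_nonneg _)
        (Finset.mem_univ (u t))
    have h3 : ∑ x, |pd t x - pr t x| = (1 - α) * ∑ x, |pu t x - pr t x| := by
      rw [Finset.mul_sum]
      apply Finset.sum_congr rfl
      intro x _
      have e : pd t x - pr t x = (1 - α) * (pu t x - pr t x) := by
        simp only [hpd]; ring
      rw [e, abs_mul, abs_of_pos h1α]
    have h4 : ∑ x, |pd t x - pr t x| ≤ 2 * Real.sqrt 2 * Real.sqrt (J t) :=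
      l1_le_sqrt_JS (pd t) (pr t) (hpd0 t) (hpr0 t) (hpd1 t) (hpr1 t)
    have h5 : ∑ x, |pu t x - pr t x| ≤ 2 * Real.sqrt 2 * Real.sqrt (J t) / (1 - α) := by
      rw [le_div_iff₀ h1α, mul_comm]
      rw [← h3]
      exact h4
    calc |Real.log (pu t (u t)) - Real.log (pr t (u t))|
        ≤ |pu t (u t) - pr t (u t)| / γ := h1
      _ ≤ (2 * Real.sqrt 2 * Real.sqrt (J t) / (1 - α)) / γ := by
          gcongr
          exact le_trans h2 h5
      _ = (2 * Real.sqrt 2 / (γ * (1 - α))) * Real.sqrt (J t) := by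
          rw [div_div, div_mul_eq_mul_div, mul_comm (1 - α) γ]
  -- averaging
  have hC : 0 ≤ 2 * Real.sqrt 2 / (γ * (1 - α)) := by positivity
  have hLHS : |(1 / (T : ℝ)) * ∑ t, Real.log (pu t (u t)) -
      (1 / (T : ℝ)) * ∑ t, Real.log (pr t (u t))| ≤
      (2 * Real.sqrt 2 / (γ * (1 - α))) * ((1 / (T : ℝ)) * ∑ t, Real.sqrt (J t)) := by
    rw [← mul_sub, ← Finset.sum_sub_distrib, abs_mul, abs_of_nonneg (by positivity : (0:ℝ) ≤ 1 / (T:ℝ))]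
    calc (1 / (T : ℝ)) * |∑ t, (Real.log (pu t (u t)) - Real.log (pr t (u t)))|
        ≤ (1 / (T : ℝ)) * ∑ t, |Real.log (pu t (u t)) - Real.log (pr t (u t))| := by
          apply mul_le_mul_of_nonneg_left (Finset.abs_sum_le_sum_abs _ _) (by positivity)
      _ ≤ (1 / (T : ℝ)) * ∑ t, (2 * Real.sqrt 2 / (γ * (1 - α))) * Real.sqrt (J t) := by
          apply mul_le_mul_of_nonneg_left _ (by positivity)
          exact Finset.sum_le_sum fun t _ => hstep t
      _ = (2 * Real.sqrt 2 / (γ * (1 - α))) * ((1 / (T : ℝ)) * ∑ t, Real.sqrt (J t)) := by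
          rw [← Finset.mul_sum]; ring
  -- Jensen / Cauchy–Schwarz for the average of square roots
  have hJensen : (1 / (T : ℝ)) * ∑ t, Real.sqrt (J t) ≤
      Real.sqrt ((1 / (T : ℝ)) * ∑ t, J t) := by
    have hcs : (∑ t, Real.sqrt (J t)) ^ 2 ≤ (T : ℝ) * ∑ t, J t := by
      have key := sq_sum_le_card_mul_sum_sq (s := Finset.univ) (f := fun t => Real.sqrt (J t))
      have e : ∀ t : Fin T, Real.sqrt (J t) ^ 2 = J t := fun t => Real.sq_sqrt (hJnn t)
      simp only [e, Finset.card_univ, Fintype.card_fin] at key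
      exact_mod_cast key
    have hsnn : 0 ≤ ∑ t, Real.sqrt (J t) := Finset.sum_nonneg fun t _ => Real.sqrt_nonneg _
    have h6 : ∑ t, Real.sqrt (J t) ≤ Real.sqrt ((T : ℝ) * ∑ t, J t) := by
      calc ∑ t, Real.sqrt (J t) = Real.sqrt ((∑ t, Real.sqrt (J t)) ^ 2) :=
            (Real.sqrt_sq hsnn).symm
        _ ≤ Real.sqrt ((T : ℝ) * ∑ t, J t) := Real.sqrt_le_sqrt hcs
    have hJsum : 0 ≤ ∑ t, J t := Finset.sum_nonneg fun t _ => hJnn t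
    have e7 : (1 / (T : ℝ)) * Real.sqrt ((T : ℝ) * ∑ t, J t) =
        Real.sqrt ((1 / (T : ℝ)) * ∑ t, J t) := by
      have hTne : (T : ℝ) ≠ 0 := hT0.ne'
      rw [show (1 / (T:ℝ)) * ∑ t, J t = (1 / (T:ℝ)) ^ 2 * ((T:ℝ) * ∑ t, J t) by
        field_simp]
      rw [Real.sqrt_mul (sq_nonneg _), Real.sqrt_sq (by positivity : (0:ℝ) ≤ 1 / (T:ℝ))]
    calc (1 / (T : ℝ)) * ∑ t, Real.sqrt (J t)
        ≤ (1 / (T : ℝ)) * Real.sqrt ((T : ℝ) * ∑ t, J t) :=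
          mul_le_mul_of_nonneg_left h6 (by positivity)
      _ = Real.sqrt ((1 / (T : ℝ)) * ∑ t, J t) := e7
  calc |(1 / (T : ℝ)) * ∑ t, Real.log (pu t (u t)) -
      (1 / (T : ℝ)) * ∑ t, Real.log (pr t (u t))|
      ≤ (2 * Real.sqrt 2 / (γ * (1 - α))) * ((1 / (T : ℝ)) * ∑ t, Real.sqrt (J t)) := hLHS
    _ ≤ (2 * Real.sqrt 2 / (γ * (1 - α))) * Real.sqrt ((1 / (T : ℝ)) * ∑ t, J t) :=
        mul_le_mul_of_nonneg_left hJensen hC
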